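/- Let e ≥ 1 and suppose τ is an integer such that τ = C(s+3, 3) − C(s+3−e, 3) − w(s) for all sufficiently large s, where w is a numerical polynomial with w(s+e) ∈ W and deg w ≤ 2. Then τ ≤ e²(e+1)²/2. -/
import Mathlib

open Filter Finset Polynomial

/-- The binomial coefficient polynomial C(x, k) = x(x-1)...(x-k+1)/k! over ℚ. -/
noncomputable def qchoose (x : ℚ) (k : ℕ) : ℚ :=
  (∏ i ∈ Finset.range k, (x - i)) / (Nat.factorial k)


/-- ω_E(s): number of points of ℕ^m of order ≤ s not componentwise above any element of E. -/
noncomputable def omegaE {m : ℕ} (E : Set (Fin m → ℕ)) (s : ℕ) : ℕ :=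
  Set.ncard {x : Fin m → ℕ | (∑ i, x i) ≤ s ∧ ∀ e ∈ E, ¬ e ≤ x}


/-- W: the set of Kolchin dimension polynomials. -/
noncomputable def IsKolchin (p : Polynomial ℚ) : Prop :=
  ∃ (m : ℕ) (E : Set (Fin m → ℕ)),
    ∀ᶠ s : ℕ in Filter.atTop, (omegaE E s : ℚ) = p.eval (s : ℚ)

namespace CB

/-- `T d u` : number of degree-`d` monomials in 3 variables whose third exponent is `< u`
(capped at `u = d+1`). -/
def T (d u : ℕ) : ℕ := ∑ t ∈ Finset.range (min u (d+1)), (d+1-t)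

lemma T_zero (d : ℕ) : T d 0 = 0 := by simp [T]

lemma T_succ (d u : ℕ) : T d (u+1) = T d u + (d+1-u) := by
  rcases le_or_gt u d with h | h
  · have h1 : min (u+1) (d+1) = u + 1 := by omega
    have h2 : min u (d+1) = u := by omega
    rw [T, T, h1, h2, Finset.sum_range_succ]
  · have h1 : min (u+1) (d+1) = d + 1 := by omega
    have h2 : min u (d+1) = d + 1 := by omega
    have h3 : d + 1 - u = 0 := by omega
    rw [T, T, h1, h2, h3, add_zero]

lemma T_mono (d : ℕ) : Monotone (T d) := by
  apply monotone_nat_of_le_succ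
  intro u; rw [T_succ]; omega

lemma T_cap (d u : ℕ) (h : d + 1 ≤ u) : T d u = T d (d+1) := by
  unfold T
  have : min u (d+1) = d+1 := by omega
  rw [this, min_self]

lemma T_lower (d u : ℕ) (h : u ≤ d + 1) : u ≤ T d u := by
  induction u with
  | zero => simp
  | succ n ih =>
    rw [T_succ]
    have := ih (by omega)
    omega

lemma T_one (d : ℕ) : T d 1 = d + 1 := by
  have h := T_succ d 0
  rw [T_zero] at h
  simpa using h

/-- splitting off the first variable:  `T (d+1) u = T d u + u` for `u ≤ d+2`. -/
lemma T_split (d u : ℕ) (h : u ≤ d + 2) : T (d+1) u = T d u + u := by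
  induction u with
  | zero => simp [T_zero]
  | succ n ih =>
    have hn : n ≤ d + 2 := by omega
    rw [T_succ, T_succ, ih hn]
    omega

/-- subadditivity across a shift: for `a ≥ 1`, `T (d+1) (a+j) ≤ T (d+1) a + T d j`. -/
lemma T_add (d a j : ℕ) (ha : 1 ≤ a) : T (d+1) (a+j) ≤ T (d+1) a + T d j := by
  induction j with
  | zero => simp [T_zero]
  | succ n ih =>
    have h1 : T (d+1) (a + n + 1) = T (d+1) (a+n) + (d + 2 - (a + n)) := T_succ _ _
    have h2 : T d (n+1) = T d n + (d + 1 - n) := T_succ _ _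
    have : a + (n + 1) = a + n + 1 := by omega
    rw [this, h1, h2]
    omega

lemma T_gap (d a q : ℕ) (h : a + q ≤ d + 1) : T d a + q ≤ T d (a + q) := by
  induction q with
  | zero => simp
  | succ n ih =>
    have h1 : T d (a + n + 1) = T d (a+n) + (d + 1 - (a + n)) := T_succ _ _
    have : a + (n+1) = a + n + 1 := by omega
    rw [this, h1]
    have := ih (by omega)
    omega

/-- largest `u ≤ d+1` such that `T d u ≤ N`. -/
def ud (d N : ℕ) : ℕ := Nat.findGreatest (fun u => T d u ≤ N) (d+1)

lemma ud_le (d N : ℕ) : ud d N ≤ d + 1 := Nat.findGreatest_le _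

lemma T_ud_le (d N : ℕ) : T d (ud d N) ≤ N :=
  Nat.findGreatest_spec (P := fun u => T d u ≤ N) (Nat.zero_le _) (by simp [T_zero])

lemma le_ud (d N v : ℕ) (h1 : T d v ≤ N) (h2 : v ≤ d + 1) : v ≤ ud d N :=
  Nat.le_findGreatest h2 h1

lemma ud_lower (d N : ℕ) : ud d N ≤ N :=
  le_trans (T_lower d _ (ud_le d N)) (T_ud_le d N)

lemma ud_mono (d : ℕ) {N N' : ℕ} (h : N ≤ N') : ud d N ≤ ud d N' :=
  le_ud _ _ _ (le_trans (T_ud_le d N) h) (ud_le d N)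

lemma ud_succ_le (d N : ℕ) : ud d (N+1) ≤ ud d N + 1 := by
  by_contra hc
  push_neg at hc
  set v := ud d (N+1) with hv
  have h1 : T d v ≤ N + 1 := T_ud_le d (N+1)
  have h2 : v ≤ d + 1 := ud_le d (N+1)
  have h3 : 1 ≤ v := by omega
  have h4 : T d (v - 1 + 1) = T d (v-1) + (d + 1 - (v-1)) := T_succ _ _
  have h5 : v - 1 + 1 = v := by omega
  rw [h5] at h4
  have h6 : T d (v-1) ≤ N := by omega
  have h7 : v - 1 ≤ ud d N := le_ud _ _ _ h6 (by omega)
  omega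

/-- Minimum size of the shadow of a set of `N` monomials of degree `d` (Macaulay / 
Clements–Lindström function, capped at the 3-variable regime). -/
def g (d N : ℕ) : ℕ :=
  match d with
  | 0 => 0
  | d' + 1 => min (N - ud (d'+1) N) (T d' (d'+1))

lemma g_zero_left (N : ℕ) : g 0 N = 0 := rfl

lemma g_succ (d N : ℕ) : g (d+1) N = min (N - ud (d+1) N) (T d (d+1)) := rfl

lemma g_zero (d : ℕ) : g d 0 = 0 := by
  cases d with
  | zero => rfl
  | succ d' => rw [g_succ]; simp

lemma g_le (d N : ℕ) : g d N ≤ N := by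
  cases d with
  | zero => simp [g_zero_left]
  | succ d' => rw [g_succ]; omega

lemma g_mono (d : ℕ) : Monotone (g d) := by
  cases d with
  | zero => intro a b _; simp [g_zero_left]
  | succ d' =>
    apply monotone_nat_of_le_succ
    intro N
    rw [g_succ, g_succ]
    have h1 := ud_succ_le (d'+1) N
    have h2 := ud_lower (d'+1) N
    omega

end CB

namespace CB2
open CB

lemma T_le_top (d u : ℕ) : T d u ≤ T d (d+1) := by
  rcases le_or_gt u (d+1) with h | h
  · exact T_mono d h
  · rw [T_cap d u (by omega)]

/-- The key submodularity inequality for the Macaulay function `g`. -/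
lemma key (d M R : ℕ) :
    g (d+2) (M+R) ≤ max R (g (d+2) M + g (d+1) R) := by
  set uM := ud (d+2) M with huM
  set U := ud (d+2) (M+R) with hUdef
  set u' := ud (d+1) R with hu'def
  set B := T (d+1) (d+2) with hB
  set B' := T d (d+1) with hB'
  have hBB' : B = B' + (d+2) := by
    have h1 : T (d+1) (d+2) = T d (d+2) + (d+2) := T_split d (d+2) (by omega)
    have h2 : T d (d+2) = T d (d+1) := T_cap d (d+2) (by omega)
    rw [hB, hB', h1, h2]
  have hG : g (d+2) (M+R) = min (M + R - U) B := by rw [g_succ]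
  have hgM : g (d+2) M = min (M - uM) B := by rw [g_succ]
  have hgR : g (d+1) R = min (R - u') B' := by rw [g_succ]
  rw [hG, hgM, hgR]
  have fTU : T (d+2) U ≤ M + R := T_ud_le _ _
  have fUle : U ≤ d + 3 := ud_le _ _
  have fTuM : T (d+2) uM ≤ M := T_ud_le _ _
  have fuMle : uM ≤ d + 3 := ud_le _ _
  have fuMM : uM ≤ M := ud_lower _ _
  have fTu' : T (d+1) u' ≤ R := T_ud_le _ _
  have fu'le : u' ≤ d + 2 := ud_le _ _
  have fu'R : u' ≤ R := ud_lower _ _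
  have hminl : min (M + R - U) B ≤ M + R - U := min_le_left _ _
  have hminr : min (M + R - U) B ≤ B := min_le_right _ _
  rcases le_or_gt (min (M + R - U) B) R with hcase | hcase
  · exact le_max_of_le_left hcase
  have hUM : U < M := by omega
  have hBR : R < B := by omega
  have hu'd : u' ≤ d + 1 := by
    by_contra hc
    push_neg at hc
    have hcap : T (d+1) u' = B := by rw [hB]; exact T_cap (d+1) u' (by omega)
    omega
  rcases le_or_gt B (M - uM) with h2a | h2b
  · apply le_max_of_le_right
    have hmB : min (M - uM) B = B := min_eq_right h2a
    rw [hmB]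
    omega
  have hgM' : min (M - uM) B = M - uM := min_eq_left (by omega)
  rw [hgM']
  have huMd : uM ≤ d + 1 := by
    by_contra hc
    push_neg at hc
    have hcap : T (d+1) uM = B := by rw [hB]; exact T_cap (d+1) uM (by omega)
    have hsplit : T (d+2) uM = T (d+1) uM + uM := T_split (d+1) uM (by omega)
    omega
  have hsplituM : T (d+2) uM = T (d+1) uM + uM := T_split (d+1) uM (by omega)
  rcases le_or_gt (R - u') B' with hbrI | hbrII
  · -- Branch I : g' = R - u'
    have hmu : min (R - u') B' = R - u' := min_eq_left hbrI
    rw [hmu]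
    apply le_max_of_le_right
    rcases Nat.eq_zero_or_pos uM with h0 | h1
    · rcases le_or_gt M u' with hMu | hMu
      · exfalso
        have hM2 : M ≤ d + 2 := by
          by_contra hc
          push_neg at hc
          have h1T : T (d+2) 1 = d + 3 := T_one (d+2)
          have := le_ud (d+2) M 1 (by omega) (by omega)
          omega
        have hsM : T (d+2) M = T (d+1) M + M := T_split (d+1) M (by omega)
        have hmm : T (d+1) M ≤ T (d+1) u' := T_mono _ hMu
        have hTT : T (d+2) M ≤ M + R := by omega
        have := le_ud (d+2) (M+R) M hTT (by omega)
        omega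
      · have hs : T (d+2) u' = T (d+1) u' + u' := T_split (d+1) u' (by omega)
        have hTT : T (d+2) u' ≤ M + R := by omega
        have := le_ud (d+2) (M+R) u' hTT (by omega)
        omega
    · rcases le_or_gt (uM + u') (d+3) with hcap | hcap
      · have hadd : T (d+2) (uM + u') ≤ T (d+2) uM + T (d+1) u' := T_add (d+1) uM u' h1
        have hTT : T (d+2) (uM+u') ≤ M + R := by omega
        have := le_ud (d+2) (M+R) (uM+u') hTT hcap
        omega
      · have hcapT : T (d+1) (uM + u') = B := by rw [hB]; exact T_cap (d+1) _ (by omega)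
        have hadd : T (d+1) (uM + u') ≤ T (d+1) uM + T d u' := T_add d uM u' h1
        have hs' : T (d+1) u' = T d u' + u' := T_split d u' (by omega)
        omega
  · -- Branch II : g' = B'
    have hmu : min (R - u') B' = B' := min_eq_right (by omega)
    rw [hmu]
    apply le_max_of_le_right
    have hjR : B' < R := by omega
    have hF8 : ∀ j, j ≤ d + 2 → T (d+1) j ≤ B' + j := by
      intro j hj
      have h1 : T (d+1) j = T d j + j := T_split d j hj
      have h2 : T d j ≤ B' := by rw [hB']; exact T_le_top d j
      omega
    rcases Nat.eq_zero_or_pos uM with h0 | h1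
    · have hM2 : M ≤ d + 2 := by
        by_contra hc
        push_neg at hc
        have h1T : T (d+2) 1 = d + 3 := T_one (d+2)
        have := le_ud (d+2) M 1 (by omega) (by omega)
        omega
      rcases le_or_gt (R - B') M with hjM | hjM
      · have hsj : T (d+2) (R - B') = T (d+1) (R - B') + (R - B') := T_split (d+1) _ (by omega)
        have h8 : T (d+1) (R - B') ≤ B' + (R - B') := hF8 _ (by omega)
        have hT : T (d+2) (R-B') ≤ M + R := by omega
        have := le_ud (d+2) (M+R) (R-B') hT (by omega)
        omega
      · exfalso
        have hsM : T (d+2) M = T (d+1) M + M := T_split (d+1) M (by omega)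
        have h8 : T (d+1) M ≤ B' + M := hF8 M (by omega)
        have hT : T (d+2) M ≤ M + R := by omega
        have := le_ud (d+2) (M+R) M hT (by omega)
        omega
    · rcases le_or_gt (uM + (R - B')) (d+3) with hcap | hcap
      · have hadd : T (d+2) (uM + (R-B')) ≤ T (d+2) uM + T (d+1) (R-B') := T_add (d+1) uM _ h1
        have h8 : T (d+1) (R-B') ≤ B' + (R-B') := hF8 _ (by omega)
        have hT : T (d+2) (uM + (R-B')) ≤ M + R := by omega
        have := le_ud (d+2) (M+R) _ hT hcap
        omega
      · have hT1 : T (d+1) 1 ≤ T (d+1) uM := T_mono (d+1) h1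
        have h1T : T (d+1) 1 = d + 2 := T_one (d+1)
        omega

/-- The numerical slice lemma. -/
lemma num : ∀ (d : ℕ) (f : ℕ → ℕ), f (d+1) ≤ 1 →
    g (d+1) (∑ t ∈ Finset.range (d+2), f t) ≤
      ∑ t ∈ Finset.range (d+1), max (g (d+1-t) (f t)) (f (t+1)) := by
  intro d
  induction d with
  | zero =>
    intro f hf
    have hg1 : ∀ X, g 1 X ≤ 1 := by
      intro X
      have h1 : T 0 1 = 1 := T_one 0
      have h2 := g_succ 0 X
      norm_num at h2
      omega
    have hgm := g_mono 1
    norm_num at hf ⊢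
    rcases Nat.le_one_iff_eq_zero_or_eq_one.mp hf with h | h
    · left
      have h2 : ∑ x ∈ Finset.range 2, f x = f 0 := by
        rw [Finset.sum_range_succ, Finset.sum_range_one, h, Nat.add_zero]
      rw [h2]
    · right
      rw [h]
      exact hg1 _
  | succ d ih =>
    intro f hf
    have hih := ih (fun t => f (t+1)) (by simpa using hf)
    set R := ∑ t ∈ Finset.range (d+2), f (t+1) with hR
    have hLHS : ∑ t ∈ Finset.range (d+3), f t = R + f 0 := by
      rw [hR]; exact Finset.sum_range_succ' f (d+2)
    have hRHS : ∑ t ∈ Finset.range (d+2), max (g (d+2-t) (f t)) (f (t+1))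
        = (∑ t ∈ Finset.range (d+1), max (g (d+2-(t+1)) (f (t+1))) (f (t+2)))
          + max (g (d+2) (f 0)) (f 1) :=
      Finset.sum_range_succ' _ (d+1)
    have hsimp : ∀ t, g (d+2-(t+1)) (f (t+1)) = g (d+1-t) (f (t+1)) := by
      intro t; congr 1; omega
    rw [hLHS, hRHS]
    have hS2 : g (d+1) R ≤ ∑ t ∈ Finset.range (d+1), max (g (d+2-(t+1)) (f (t+1))) (f (t+2)) := by
      calc g (d+1) R ≤ ∑ t ∈ Finset.range (d+1), max (g (d+1-t) (f (t+1))) (f (t+1+1)) := hih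
        _ = _ := by
            apply Finset.sum_congr rfl
            intro t _
            rw [hsimp t]
    have hRsplit : R = (∑ t ∈ Finset.range (d+1), f (t+2)) + f 1 := by
      rw [hR]; exact Finset.sum_range_succ' (fun t => f (t+1)) (d+1)
    have hlow : (∑ t ∈ Finset.range (d+1), f (t+2)) ≤
        ∑ t ∈ Finset.range (d+1), max (g (d+2-(t+1)) (f (t+1))) (f (t+2)) := by
      apply Finset.sum_le_sum
      intro t _
      exact le_max_right _ _
    have hkey : g (d+2) (f 0 + R) ≤ max R (g (d+2) (f 0) + g (d+1) R) := key d (f 0) R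
    have hfin : g (d+2) (f 0 + R) ≤
        (∑ t ∈ Finset.range (d+1), max (g (d+2-(t+1)) (f (t+1))) (f (t+2)))
          + max (g (d+2) (f 0)) (f 1) := by
      rcases le_max_iff.mp hkey with h | h
      · have h1 : f 1 ≤ max (g (d+2) (f 0)) (f 1) := le_max_right _ _
        omega
      · have h1 : g (d+2) (f 0) ≤ max (g (d+2) (f 0)) (f 1) := le_max_left _ _
        omega
    calc g (d+1+1) (R + f 0) = g (d+2) (f 0 + R) := by rw [Nat.add_comm R (f 0)]
      _ ≤ _ := hfin

end CB2

namespace CB3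
open CB CB2

/-- total degree of a lattice point -/
def deg {m : ℕ} (x : Fin m → ℕ) : ℕ := ∑ i, x i

/-- the lower shadow of a set of lattice points -/
def shadow {m : ℕ} (A : Finset (Fin m → ℕ)) : Finset (Fin m → ℕ) :=
  A.biUnion (fun x => (Finset.univ.filter (fun i => 0 < x i)).image
    (fun i => Function.update x i (x i - 1)))

lemma mem_shadow {m : ℕ} {A : Finset (Fin m → ℕ)} {y : Fin m → ℕ} :
    y ∈ shadow A ↔ ∃ x ∈ A, ∃ i, 0 < x i ∧ Function.update x i (x i - 1) = y := by
  simp [shadow]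

lemma deg_update {m : ℕ} {x : Fin m → ℕ} {i : Fin m} (h : 0 < x i) :
    deg (Function.update x i (x i - 1)) + 1 = deg x := by
  unfold deg
  rw [Finset.sum_update_of_mem (Finset.mem_univ i)]
  have h2 : ∑ j ∈ Finset.univ, x j = x i + ∑ j ∈ Finset.univ \ {i}, x j := by
    rw [Finset.sum_eq_add_sum_sdiff_singleton_of_mem (Finset.mem_univ i)]
  omega

lemma update_le {m : ℕ} {x : Fin m → ℕ} {i : Fin m} :
    Function.update x i (x i - 1) ≤ x := by
  intro j
  rcases eq_or_ne j i with rfl | hne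
  · rw [Function.update_self]
    exact Nat.sub_le _ _
  · rw [Function.update_of_ne hne]

lemma le_deg {m : ℕ} (x : Fin m → ℕ) (i : Fin m) : x i ≤ deg x :=
  Finset.single_le_sum (fun j _ => Nat.zero_le (x j)) (Finset.mem_univ i)

/-- restriction to the first `m` coordinates -/
def front {m : ℕ} (x : Fin (m+1) → ℕ) : Fin m → ℕ := x ∘ Fin.castSucc

lemma front_last_ext {m : ℕ} {x y : Fin (m+1) → ℕ} (h1 : front x = front y)
    (h2 : x (Fin.last m) = y (Fin.last m)) : x = y := by
  funext j
  rcases Fin.eq_castSucc_or_eq_last j with ⟨j', rfl⟩ | rfl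
  · exact congrFun h1 j'
  · exact h2

lemma deg_front {m : ℕ} (x : Fin (m+1) → ℕ) : deg x = deg (front x) + x (Fin.last m) := by
  unfold deg front
  rw [Fin.sum_univ_castSucc]
  rfl

/-- slice of a set at last coordinate `t` -/
def slice {m : ℕ} (A : Finset (Fin (m+1) → ℕ)) (t : ℕ) : Finset (Fin m → ℕ) :=
  (A.filter (fun x => x (Fin.last m) = t)).image front

lemma mem_slice {m : ℕ} {A : Finset (Fin (m+1) → ℕ)} {t : ℕ} {y : Fin m → ℕ} :
    y ∈ slice A t ↔ ∃ x ∈ A, x (Fin.last m) = t ∧ front x = y := by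
  simp [slice]
  tauto

lemma card_slice_sum {m : ℕ} (A : Finset (Fin (m+1) → ℕ)) (n : ℕ)
    (hA : ∀ x ∈ A, x (Fin.last m) < n) :
    A.card = ∑ t ∈ Finset.range n, (slice A t).card := by
  have h1 : A.card = ∑ t ∈ Finset.range n,
      (A.filter (fun x => x (Fin.last m) = t)).card :=
    Finset.card_eq_sum_card_fiberwise (fun x hx => Finset.mem_range.mpr (hA x hx))
  rw [h1]
  apply Finset.sum_congr rfl
  intro t _
  rw [slice, Finset.card_image_of_injOn]
  intro x hx y hy hxy
  simp only [Finset.mem_coe, Finset.mem_filter] at hx hy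
  exact front_last_ext hxy (hx.2.trans hy.2.symm)

lemma shadow_slice_sub {m : ℕ} (A : Finset (Fin (m+1) → ℕ)) (t : ℕ) :
    shadow (slice A t) ⊆ slice (shadow A) t := by
  intro y hy
  rw [mem_shadow] at hy
  obtain ⟨z, hz, j, hj, hupd⟩ := hy
  rw [mem_slice] at hz
  obtain ⟨x, hxA, hxt, hfx⟩ := hz
  rw [mem_slice]
  refine ⟨Function.update x (Fin.castSucc j) (x (Fin.castSucc j) - 1), ?_, ?_, ?_⟩
  · rw [mem_shadow]
    refine ⟨x, hxA, Fin.castSucc j, ?_, rfl⟩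
    have : x (Fin.castSucc j) = z j := by rw [← hfx]; rfl
    omega
  · rw [Function.update_of_ne (Ne.symm (Fin.ne_last_of_lt (Fin.castSucc_lt_last j)))]
    exact hxt
  · have hinj : Function.Injective (Fin.castSucc : Fin m → Fin (m+1)) :=
      Fin.castSucc_injective m
    have hcomp : front (Function.update x (Fin.castSucc j) (x (Fin.castSucc j) - 1))
        = Function.update (front x) j (x (Fin.castSucc j) - 1) := by
      unfold front
      exact Function.update_comp_eq_of_injective _ hinj _ _
    rw [hcomp, hfx]
    have : x (Fin.castSucc j) = z j := by rw [← hfx]; rfl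
    rw [this, hupd]

lemma slice_succ_sub {m : ℕ} (A : Finset (Fin (m+1) → ℕ)) (t : ℕ) :
    slice A (t+1) ⊆ slice (shadow A) t := by
  intro y hy
  rw [mem_slice] at hy
  obtain ⟨x, hxA, hxt, hfx⟩ := hy
  rw [mem_slice]
  refine ⟨Function.update x (Fin.last m) (x (Fin.last m) - 1), ?_, ?_, ?_⟩
  · rw [mem_shadow]
    exact ⟨x, hxA, Fin.last m, by omega, rfl⟩
  · rw [Function.update_self]
    omega
  · rw [← hfx]
    funext j
    unfold front
    simp only [Function.comp_apply]
    rw [Function.update_of_ne (Fin.ne_last_of_lt (Fin.castSucc_lt_last j))]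

lemma slice_top_card {m : ℕ} (A : Finset (Fin (m+1) → ℕ)) (d : ℕ)
    (hd : ∀ x ∈ A, deg x = d) : (slice A d).card ≤ 1 := by
  apply Finset.card_le_one.mpr
  intro a ha b hb
  rw [mem_slice] at ha hb
  obtain ⟨x, hxA, hxt, hfx⟩ := ha
  obtain ⟨x', hxA', hxt', hfx'⟩ := hb
  have h1 : deg x = d := hd x hxA
  have h2 : deg x' = d := hd x' hxA'
  rw [deg_front, hxt] at h1
  rw [deg_front, hxt'] at h2
  have ha0 : deg (front x) = 0 := by omega
  have hb0 : deg (front x') = 0 := by omega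
  have hz : ∀ (z : Fin m → ℕ), deg z = 0 → z = fun _ => 0 := by
    intro z hzd
    funext i
    have := le_deg z i
    omega
  rw [← hfx, ← hfx', hz _ ha0, hz _ hb0]

/-- Macaulay-type lower bound for shadows of homogeneous families in `ℕ^m`. -/
theorem shadow_bound : ∀ (m d : ℕ) (A : Finset (Fin m → ℕ)), 1 ≤ d →
    (∀ x ∈ A, deg x = d) → g d A.card ≤ (shadow A).card := by
  intro m
  induction m with
  | zero =>
    intro d A hd hA
    have hempty : A = ∅ := by
      apply Finset.eq_empty_of_forall_notMem
      intro x hx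
      have := hA x hx
      have h0 : deg x = 0 := by
        unfold deg
        simp
      omega
    rw [hempty]
    simp [g_zero]
  | succ m ih =>
    intro d A hd hA
    obtain ⟨dd, rfl⟩ : ∃ dd, d = dd + 1 := ⟨d - 1, by omega⟩
    set f : ℕ → ℕ := fun t => (slice A t).card with hf
    have hAcard : A.card = ∑ t ∈ Finset.range (dd+2), f t := by
      apply card_slice_sum
      intro x hx
      have := le_deg x (Fin.last m)
      have := hA x hx
      omega
    have hshadowdeg : ∀ y ∈ shadow A, deg y + 1 = dd + 1 := by
      intro y hy
      rw [mem_shadow] at hy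
      obtain ⟨x, hxA, i, hi, hupd⟩ := hy
      rw [← hupd]
      rw [deg_update hi]
      exact hA x hxA
    have hScard : (shadow A).card = ∑ t ∈ Finset.range (dd+1),
        (slice (shadow A) t).card := by
      apply card_slice_sum
      intro y hy
      have h1 := hshadowdeg y hy
      have h2 := le_deg y (Fin.last m)
      omega
    have hslice_deg : ∀ t, ∀ z ∈ slice A t, deg z = dd + 1 - t := by
      intro t z hz
      rw [mem_slice] at hz
      obtain ⟨x, hxA, hxt, hfx⟩ := hz
      have := hA x hxA
      rw [deg_front, hxt, hfx] at this
      omega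
    have hbound : ∀ t ∈ Finset.range (dd+1),
        max (g (dd+1-t) (f t)) (f (t+1)) ≤ (slice (shadow A) t).card := by
      intro t ht
      rw [Finset.mem_range] at ht
      apply max_le
      · calc g (dd+1-t) (f t) ≤ (shadow (slice A t)).card := by
              apply ih (dd+1-t) (slice A t) (by omega)
              intro z hz
              exact hslice_deg t z hz
          _ ≤ (slice (shadow A) t).card :=
              Finset.card_le_card (shadow_slice_sub A t)
      · exact Finset.card_le_card (slice_succ_sub A t)
    have htop : f (dd+1) ≤ 1 := slice_top_card A (dd+1) hA
    calc g (dd+1) A.card = g (dd+1) (∑ t ∈ Finset.range (dd+2), f t) := by rw [hAcard]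
      _ ≤ ∑ t ∈ Finset.range (dd+1), max (g (dd+1-t) (f t)) (f (t+1)) := num dd f htop
      _ ≤ ∑ t ∈ Finset.range (dd+1), (slice (shadow A) t).card :=
          Finset.sum_le_sum hbound
      _ = (shadow A).card := hScard.symm

end CB3

namespace CB4
open CB CB2 CB3

variable {m : ℕ}

/-- the lower set attached to `E` -/
def Lset (E : Set (Fin m → ℕ)) : Set (Fin m → ℕ) := {x | ∀ e ∈ E, ¬ e ≤ x}

lemma Lset_lower {E : Set (Fin m → ℕ)} {x y : Fin m → ℕ} (hx : x ∈ Lset E) (hyx : y ≤ x) :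
    y ∈ Lset E := fun e he hey => hx e he (hey.trans hyx)

lemma lvl_finite (E : Set (Fin m → ℕ)) (k : ℕ) :
    {x : Fin m → ℕ | x ∈ Lset E ∧ deg x = k}.Finite := by
  apply Set.Finite.subset (Set.finite_Iic (fun _ : Fin m => k))
  intro x hx
  rw [Set.mem_Iic]
  intro i
  show x i ≤ k
  have h1 := le_deg x i
  have h2 := hx.2
  omega

noncomputable def lvlF (E : Set (Fin m → ℕ)) (k : ℕ) : Finset (Fin m → ℕ) :=
  (lvl_finite E k).toFinset

lemma mem_lvlF {E : Set (Fin m → ℕ)} {k : ℕ} {x : Fin m → ℕ} :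
    x ∈ lvlF E k ↔ x ∈ Lset E ∧ deg x = k := Set.Finite.mem_toFinset _

/-- level counting function of the lower set -/
noncomputable def hfun (E : Set (Fin m → ℕ)) (k : ℕ) : ℕ := (lvlF E k).card

lemma shadow_lvl_sub (E : Set (Fin m → ℕ)) (k : ℕ) :
    shadow (lvlF E (k+1)) ⊆ lvlF E k := by
  intro y hy
  rw [mem_shadow] at hy
  obtain ⟨x, hx, i, hi, hupd⟩ := hy
  rw [mem_lvlF] at hx ⊢
  constructor
  · rw [← hupd]
    exact Lset_lower hx.1 update_le
  · have := deg_update hi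
    have := hx.2
    rw [← hupd]
    omega

lemma h_chain (E : Set (Fin m → ℕ)) (k : ℕ) :
    g (k+1) (hfun E (k+1)) ≤ hfun E k :=
  calc g (k+1) (hfun E (k+1)) ≤ (shadow (lvlF E (k+1))).card :=
        shadow_bound m (k+1) _ (by omega) (fun x hx => (mem_lvlF.mp hx).2)
    _ ≤ hfun E k := Finset.card_le_card (shadow_lvl_sub E k)

lemma ball_finite (E : Set (Fin m → ℕ)) (s : ℕ) :
    {x : Fin m → ℕ | (∑ i, x i) ≤ s ∧ ∀ e ∈ E, ¬ e ≤ x}.Finite := by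
  apply Set.Finite.subset (Set.finite_Iic (fun _ : Fin m => s))
  intro x hx
  rw [Set.mem_Iic]
  intro i
  show x i ≤ s
  have h1 := le_deg x i
  have h2 := hx.1
  unfold deg at h1
  omega

lemma omega_eq_sum (E : Set (Fin m → ℕ)) (s : ℕ) :
    omegaE E s = ∑ k ∈ Finset.range (s+1), hfun E k := by
  induction s with
  | zero =>
    rw [Finset.sum_range_one]
    unfold omegaE hfun lvlF
    rw [Set.ncard_eq_toFinset_card _ (ball_finite E 0)]
    congr 1
    ext x
    rw [Set.Finite.mem_toFinset, Set.Finite.mem_toFinset]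
    constructor
    · intro hx
      exact ⟨hx.2, Nat.le_zero.mp hx.1⟩
    · intro hx
      exact ⟨Nat.le_of_eq hx.2, hx.1⟩
  | succ s ih =>
    have hsplit : {x : Fin m → ℕ | (∑ i, x i) ≤ s + 1 ∧ ∀ e ∈ E, ¬ e ≤ x}
        = {x : Fin m → ℕ | (∑ i, x i) ≤ s ∧ ∀ e ∈ E, ¬ e ≤ x}
          ∪ {x : Fin m → ℕ | x ∈ Lset E ∧ deg x = s + 1} := by
      ext x
      simp only [Set.mem_setOf_eq, Set.mem_union, Lset, deg]
      constructor
      · intro hx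
        rcases Nat.lt_or_ge (∑ i, x i) (s+1) with h | h
        · exact Or.inl ⟨by omega, hx.2⟩
        · exact Or.inr ⟨hx.2, by omega⟩
      · intro hx
        rcases hx with h | h
        · exact ⟨by omega, h.2⟩
        · exact ⟨by omega, h.1⟩
    have hdisj : Disjoint {x : Fin m → ℕ | (∑ i, x i) ≤ s ∧ ∀ e ∈ E, ¬ e ≤ x}
        {x : Fin m → ℕ | x ∈ Lset E ∧ deg x = s + 1} := by
      rw [Set.disjoint_left]
      intro x hx hx2
      have := hx.1
      have := hx2.2
      unfold deg at *
      omega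
    unfold omegaE
    rw [hsplit, Set.ncard_union_eq hdisj (ball_finite E s) (lvl_finite E (s+1)),
      Finset.sum_range_succ, ← ih]
    congr 1
    · exact (Set.ncard_eq_toFinset_card _ (lvl_finite E (s+1)))

end CB4

namespace CB5
open CB CB2 CB3 CB4

lemma choose2_succ' (n : ℕ) : (n+2).choose 2 = (n+1).choose 2 + (n+1) := by
  have h : (n+2).choose 2 = (n+1).choose 1 + (n+1).choose 2 := Nat.choose_succ_succ (n+1) 1
  rw [Nat.choose_one_right] at h
  omega

lemma T_top_choose (d : ℕ) : T d (d+1) = (d+2).choose 2 := by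
  induction d with
  | zero =>
    have := T_one 0
    simp [Nat.choose]
    omega
  | succ d ih =>
    show T (d+1) (d+2) = (d+3).choose 2
    have h1 : T (d+1) (d+2) = T (d+1) (d+1) + (d+2-(d+1)) := T_succ (d+1) (d+1)
    have h2 : T (d+1) (d+1) = T d (d+1) + (d+1) := T_split d (d+1) (by omega)
    have h3 : (d+3).choose 2 = (d+2).choose 2 + (d+2) := choose2_succ' (d+1)
    omega

lemma qc2 (n : ℕ) : (((n+1).choose 2 : ℕ) : ℚ) = n*(n+1)/2 := by
  induction n with
  | zero => simp
  | succ n ih =>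
    have h := choose2_succ' n
    push_cast [h]
    rw [ih]
    push_cast
    ring

/-- the minimal admissible level-count sequence -/
def phi (e k : ℕ) : ℕ :=
  if k ≤ e then (k+2).choose 2
  else if k < e*e + e then (e+2).choose 2 + (e+1)*(k-e)
  else e*k + (e + (e+1).choose 2)

lemma phi_top (e k : ℕ) (he : 1 ≤ e) (hk : e*e + e ≤ k) :
    phi e k = e*k + (e + (e+1).choose 2) := by
  have he2 : 1 ≤ e*e := Nat.mul_le_mul he he
  unfold phi
  rw [if_neg (by omega), if_neg (by omega)]

lemma T_e1 (e j : ℕ) : T (e+j+1) (e+1) = (e+2).choose 2 + (e+1)*(j+1) := by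
  induction j with
  | zero =>
    have h1 : T (e+1) (e+1) = T e (e+1) + (e+1) := T_split e (e+1) (by omega)
    rw [T_top_choose e] at h1
    show T (e+1) (e+1) = (e+2).choose 2 + (e+1)*1
    omega
  | succ j ih =>
    have h1 : T (e+j+2) (e+1) = T (e+j+1) (e+1) + (e+1) := T_split (e+j+1) (e+1) (by omega)
    have h2 : (e+1)*(j+2) = (e+1)*(j+1) + (e+1) := by ring
    show T (e+j+2) (e+1) = (e+2).choose 2 + (e+1)*(j+2)
    omega

lemma T_e0 (e j : ℕ) : T (e+j) e = T e e + j*e := by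
  induction j with
  | zero => simp
  | succ j ih =>
    have h1 : T (e+j+1) e = T (e+j) e + e := T_split (e+j) e (by omega)
    have h2 : (j+1)*e = j*e + e := by ring
    show T (e+j+1) e = T e e + (j+1)*e
    omega

lemma T_ee (e : ℕ) : T e e + 1 = (e+2).choose 2 := by
  have h1 : T e (e+1) = T e e + (e+1-e) := T_succ e e
  have h2 := T_top_choose e
  omega

lemma phi_top' (e k : ℕ) (he : 1 ≤ e) (hk : e*e + e - 1 ≤ k) :
    phi e k = e*k + (e + (e+1).choose 2) := by
  have he2 : 1 ≤ e*e := Nat.mul_le_mul he he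
  rcases le_or_gt (e*e+e) k with h | h
  · exact phi_top e k he h
  · -- k = e*e + e - 1
    have hkeq : k = e*e + e - 1 := by omega
    rcases eq_or_lt_of_le he with he1 | he2'
    · -- e = 1
      subst hkeq
      rw [← he1]
      norm_num [phi, Nat.choose]
    · -- e ≥ 2 : k in region 2
      have hke : e < k := by
        have : 2*2 ≤ e*e := Nat.mul_le_mul he2' he2'
        omega
      unfold phi
      rw [if_neg (by omega), if_pos (by omega)]
      -- (e+2).choose 2 + (e+1)*(k-e) = e*k + (e + (e+1).choose 2)
      obtain ⟨a, ha⟩ : ∃ a, e*e = a + 1 := ⟨e*e-1, by omega⟩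
      have hkea : k - e = a := by omega
      rw [hkea, choose2_succ' e]
      -- (e+1).choose 2 + (e+1) + (e+1)*a = e*k + (e + (e+1).choose 2)
      have hk2 : k = a + e := by omega
      rw [hk2]
      have h3 : (e+1)*a = e*a + a := by ring
      have h4 : e*(a+e) = e*a + e*e := by ring
      omega

lemma step (e k : ℕ) (he : 1 ≤ e) : phi e k ≤ g (k+1) (phi e (k+1)) := by
  have he2 : 1 ≤ e*e := Nat.mul_le_mul he he
  have hcap : T k (k+1) = (k+2).choose 2 := T_top_choose k
  rcases le_or_gt (k+1) e with hA | hA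
  · -- region 1
    have hval : phi e (k+1) = (k+3).choose 2 := by unfold phi; rw [if_pos hA]
    have hphik : phi e k = (k+2).choose 2 := by unfold phi; rw [if_pos (by omega)]
    have hT : T (k+1) (k+2) = (k+3).choose 2 := T_top_choose (k+1)
    have hud : ud (k+1) ((k+3).choose 2) = k+2 :=
      le_antisymm (ud_le _ _) (le_ud _ _ _ (by omega) (le_refl _))
    rw [g_succ, hval, hud, hcap]
    have hch : (k+3).choose 2 = (k+2).choose 2 + (k+2) := choose2_succ' (k+1)
    omega
  · rcases lt_or_ge (k+1) (e*e+e) with hB | hC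
    · -- region 2
      have hke : e ≤ k := by omega
      obtain ⟨j, rfl⟩ : ∃ j, k = e + j := ⟨k - e, by omega⟩
      have hval : phi e (e+j+1) = (e+2).choose 2 + (e+1)*(j+1) := by
        unfold phi
        rw [if_neg (by omega), if_pos (by omega)]
        congr 2
        omega
      have hNT : T (e+j+1) (e+1) = (e+2).choose 2 + (e+1)*(j+1) := T_e1 e j
      have hud : ud (e+j+1) (phi e (e+j+1)) = e+1 := by
        apply le_antisymm
        · by_contra hc
          push_neg at hc
          have h1 : T (e+j+1) (e+2) ≤ T (e+j+1) (ud (e+j+1) (phi e (e+j+1))) :=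
            T_mono _ (by omega)
          have h2 := T_ud_le (e+j+1) (phi e (e+j+1))
          have h3 : T (e+j+1) (e+2) = T (e+j+1) (e+1) + (e+j+2-(e+1)) := T_succ _ _
          omega
        · exact le_ud _ _ _ (by omega) (by omega)
      have hsplitc : T (e+j+1) (e+1) = T (e+j) (e+1) + (e+1) := T_split (e+j) (e+1) (by omega)
      have hmono : T (e+j) (e+1) ≤ T (e+j) (e+j+1) := T_mono _ (by omega)
      have hcap2 : T (e+j) (e+j+1) = (e+j+2).choose 2 := T_top_choose (e+j)
      have hphik : phi e (e+j) = (e+2).choose 2 + (e+1)*j := by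
        rcases Nat.eq_zero_or_pos j with rfl | hj
        · unfold phi
          rw [if_pos (by omega)]
          simp
        · unfold phi
          rw [if_neg (by omega), if_pos (by omega)]
          congr 2
          omega
      rw [g_succ, hud, hphik, hval]
      have hmul : (e+1)*(j+1) = (e+1)*j + (e+1) := by ring
      -- cap is T (e+j) (e+j+1)
      omega
    · -- region 3
      obtain ⟨j, hkj, hje⟩ : ∃ j, k+1 = e + j ∧ e*e ≤ j := ⟨k+1-e, by omega, by omega⟩
      have hTee := T_ee e
      have hT0 : T (e+j) e = T e e + j*e := T_e0 e j
      have hval : phi e (k+1) = e*(k+1) + (e + (e+1).choose 2) := phi_top e (k+1) he (by omega)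
      have hNT : phi e (k+1) = T (k+1) e + e*e := by
        rw [hval, hkj, hT0]
        have hc2 := choose2_succ' e
        have h3 : e*(e+j) = e*e + e*j := by ring
        have h4 : j*e = e*j := by ring
        omega
      have hud : ud (k+1) (phi e (k+1)) = e := by
        apply le_antisymm
        · by_contra hc
          push_neg at hc
          have h1 : T (k+1) (e+1) ≤ T (k+1) (ud (k+1) (phi e (k+1))) := T_mono _ (by omega)
          have h2 := T_ud_le (k+1) (phi e (k+1))
          have h3 : T (k+1) (e+1) = T (k+1) e + (k+2-e) := T_succ _ _
          omega
        · exact le_ud _ _ _ (by omega) (by omega)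
      have hgap : T k e + e*e ≤ T k (e + e*e) := T_gap k e (e*e) (by omega)
      have hmono : T k (e+e*e) ≤ T k (k+1) := T_mono _ (by omega)
      have hsplit2 : T (k+1) e = T k e + e := T_split k e (by omega)
      have hphik : phi e k = e*k + (e + (e+1).choose 2) := phi_top' e k he (by omega)
      rw [g_succ, hud, hphik]
      have hmul : e*(k+1) = e*k + e := by ring
      omega

end CB5

namespace CB6
open CB CB2 CB3 CB4 CB5

lemma phidown {m : ℕ} (E : Set (Fin m → ℕ)) (e s₀ : ℕ) (he : 1 ≤ e)
    (hbase : phi e s₀ ≤ hfun E s₀) : ∀ k, k ≤ s₀ → phi e k ≤ hfun E k := by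
  have aux : ∀ n k, k + n = s₀ → phi e k ≤ hfun E k := by
    intro n
    induction n with
    | zero =>
      intro k hk
      have hks : k = s₀ := by omega
      rwa [hks]
    | succ n ih =>
      intro k hk
      calc phi e k ≤ g (k+1) (phi e (k+1)) := step e k he
        _ ≤ g (k+1) (hfun E (k+1)) := g_mono _ (ih (k+1) (by omega))
        _ ≤ hfun E k := h_chain E k
  intro k hk
  exact aux (s₀ - k) k (by omega)

lemma sum_id (n : ℕ) : ∑ j ∈ Finset.range n, (j:ℚ) = n*(n-1)/2 := by
  induction n with
  | zero => simp
  | succ n ih =>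
    rw [Finset.sum_range_succ, ih]
    push_cast
    ring

lemma sum_tri (n : ℕ) : ∑ k ∈ Finset.range n, (((k:ℚ))+1)*((k:ℚ)+2)/2 = n*(n+1)*(n+2)/6 := by
  induction n with
  | zero => simp
  | succ n ih =>
    rw [Finset.sum_range_succ, ih]
    push_cast
    ring

lemma qchoose3 (x : ℚ) : qchoose x 3 = x*(x-1)*(x-2)/6 := by
  unfold qchoose
  rw [Finset.prod_range_succ, Finset.prod_range_succ, Finset.prod_range_one]
  norm_num [Nat.factorial]

lemma castc2 (k : ℕ) : (((k+2).choose 2 : ℕ):ℚ) = ((k:ℚ)+1)*((k:ℚ)+2)/2 := by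
  have h := qc2 (k+1)
  push_cast at h
  rw [show k+2 = k+1+1 from rfl]
  rw [h]
  ring

lemma sum_phi (e s : ℕ) (he : 1 ≤ e) (hs : e*e + e ≤ s) :
    ∑ k ∈ Finset.range (s+1), ((phi e k : ℕ) : ℚ)
      = qchoose ((s:ℚ)+(e:ℚ)+3) 3 - qchoose ((s:ℚ)+3) 3 - (e:ℚ)^2*((e:ℚ)+1)^2/2 := by
  have he2 : 1 ≤ e*e := Nat.mul_le_mul he he
  have hsplit1 : ∑ k ∈ Finset.range (s+1), ((phi e k : ℕ):ℚ)
      = (∑ k ∈ Finset.Ico 0 (e+1), ((phi e k : ℕ):ℚ))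
        + (∑ k ∈ Finset.Ico (e+1) (e*e+e), ((phi e k : ℕ):ℚ))
        + (∑ k ∈ Finset.Ico (e*e+e) (s+1), ((phi e k : ℕ):ℚ)) := by
    rw [Finset.range_eq_Ico,
      ← Finset.sum_Ico_consecutive _ (show 0 ≤ e*e+e by omega) (show e*e+e ≤ s+1 by omega),
      ← Finset.sum_Ico_consecutive _ (show 0 ≤ e+1 by omega) (show e+1 ≤ e*e+e by omega)]
  have hS1 : ∑ k ∈ Finset.Ico 0 (e+1), ((phi e k : ℕ):ℚ)
      = ((e:ℚ)+1)*((e:ℚ)+2)*((e:ℚ)+3)/6 := by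
    rw [← Finset.range_eq_Ico]
    have hcongr : ∀ k ∈ Finset.range (e+1), ((phi e k : ℕ):ℚ) = ((k:ℚ)+1)*((k:ℚ)+2)/2 := by
      intro k hk
      rw [Finset.mem_range] at hk
      have hv : phi e k = (k+2).choose 2 := by unfold phi; rw [if_pos (by omega)]
      rw [hv, castc2]
    rw [Finset.sum_congr rfl hcongr, sum_tri (e+1)]
    push_cast
    ring
  have hS2 : ∑ k ∈ Finset.Ico (e+1) (e*e+e), ((phi e k : ℕ):ℚ)
      = ((e:ℚ)*(e:ℚ)-1) * (((e:ℚ)+1)*((e:ℚ)+2)/2)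
        + ((e:ℚ)+1) * (((e:ℚ)*(e:ℚ)-1)*((e:ℚ)*(e:ℚ))/2) := by
    rw [Finset.sum_Ico_eq_sum_range]
    have hn : e*e+e-(e+1) = e*e-1 := by omega
    rw [hn]
    have hcongr : ∀ j ∈ Finset.range (e*e-1), ((phi e (e+1+j) : ℕ):ℚ)
        = ((e:ℚ)+1)*((e:ℚ)+2)/2 + ((e:ℚ)+1)*((j:ℚ)+1) := by
      intro j hj
      rw [Finset.mem_range] at hj
      have hv : phi e (e+1+j) = (e+2).choose 2 + (e+1)*(j+1) := by
        unfold phi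
        rw [if_neg (by omega), if_pos (by omega)]
        congr 2
        omega
      rw [hv]
      push_cast [castc2]
      ring
    rw [Finset.sum_congr rfl hcongr, Finset.sum_add_distrib, Finset.sum_const,
      Finset.card_range, ← Finset.mul_sum, Finset.sum_add_distrib, Finset.sum_const,
      Finset.card_range, sum_id]
    have hc : ((e*e-1 : ℕ):ℚ) = (e:ℚ)*(e:ℚ)-1 := by
      push_cast [he2]
      ring
    rw [nsmul_eq_mul, nsmul_eq_mul, hc]
    ring
  have hS3 : ∑ k ∈ Finset.Ico (e*e+e) (s+1), ((phi e k : ℕ):ℚ)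
      = ((s:ℚ)+1-((e:ℚ)*(e:ℚ)+(e:ℚ))) * ((e:ℚ)*((e:ℚ)*(e:ℚ)+(e:ℚ)) + ((e:ℚ) + (e:ℚ)*((e:ℚ)+1)/2))
        + (e:ℚ) * ( ((s:ℚ)+1-((e:ℚ)*(e:ℚ)+(e:ℚ))) * (((s:ℚ)+1-((e:ℚ)*(e:ℚ)+(e:ℚ))) - 1) / 2) := by
    rw [Finset.sum_Ico_eq_sum_range]
    have hcongr : ∀ j ∈ Finset.range (s+1-(e*e+e)), ((phi e (e*e+e+j) : ℕ):ℚ)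
        = ((e:ℚ)*((e:ℚ)*(e:ℚ)+(e:ℚ)) + ((e:ℚ) + (e:ℚ)*((e:ℚ)+1)/2)) + (e:ℚ)*(j:ℚ) := by
      intro j hj
      have hv : phi e (e*e+e+j) = e*(e*e+e+j) + (e + (e+1).choose 2) := by
        apply phi_top e _ he
        omega
      rw [hv]
      have hq := qc2 e
      push_cast [hq]
      ring
    rw [Finset.sum_congr rfl hcongr, Finset.sum_add_distrib, Finset.sum_const,
      Finset.card_range, ← Finset.mul_sum, sum_id]
    have hc : ((s+1-(e*e+e) : ℕ):ℚ) = (s:ℚ)+1-((e:ℚ)*(e:ℚ)+(e:ℚ)) := by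
      push_cast [show e*e+e ≤ s+1 by omega]
      ring
    rw [nsmul_eq_mul, hc]
  rw [hsplit1, hS1, hS2, hS3, qchoose3, qchoose3]
  field_simp
  ring

end CB6

open CB CB2 CB3 CB4 CB5 CB6

/-- Codimension-3 Bézout bound: if τ = C(s+3,3) - C(s+3-e,3) - w(s) eventually, where w is a
numerical polynomial of degree ≤ 2 with w(s+e) ∈ W, then τ ≤ e²(e+1)²/2. -/
theorem codim_three_bound (e : ℕ) (he : 1 ≤ e) (τ : ℤ) (w : Polynomial ℚ)
    (hdeg : w.natDegree ≤ 2)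
    (hW : IsKolchin (w.comp (Polynomial.X + Polynomial.C (e : ℚ))))
    (hid : ∀ᶠ s : ℕ in Filter.atTop,
      (τ : ℚ) = qchoose ((s : ℚ) + 3) 3 - qchoose ((s : ℚ) + 3 - (e : ℚ)) 3
        - w.eval (s : ℚ)) :
    2 * (τ : ℚ) ≤ (e : ℚ) ^ 2 * ((e : ℚ) + 1) ^ 2 := by
  obtain ⟨m, E, hWev⟩ := hW
  rw [Filter.eventually_atTop] at hWev hid
  obtain ⟨N₁, hN₁⟩ := hWev
  obtain ⟨N₂, hN₂⟩ := hid
  have hcomb : ∀ s : ℕ, N₁ + N₂ ≤ s →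
      ((omegaE E s : ℕ) : ℚ) = qchoose ((s:ℚ)+(e:ℚ)+3) 3 - qchoose ((s:ℚ)+3) 3 - (τ:ℚ) := by
    intro s hs
    have h1 := hN₁ s (by omega)
    have h2 := hN₂ (s+e) (by omega)
    rw [Polynomial.eval_comp, Polynomial.eval_add, Polynomial.eval_X, Polynomial.eval_C] at h1
    have hc1 : ((s+e:ℕ):ℚ) = (s:ℚ)+(e:ℚ) := by push_cast; ring
    rw [hc1] at h2
    have hc2 : (s:ℚ)+(e:ℚ)+3-(e:ℚ) = (s:ℚ)+3 := by ring
    rw [hc2] at h2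
    rw [h1]
    linarith [h2]
  have hdiffk : ∀ k : ℕ, N₁ + N₂ + 1 ≤ k → hfun E k = e*k + (e + (e+1).choose 2) := by
    intro k hk
    have h1 := hcomb k (by omega)
    have h2 := hcomb (k-1) (by omega)
    rw [omega_eq_sum] at h1 h2
    have h3 : k - 1 + 1 = k := by omega
    rw [h3] at h2
    have h4 : (∑ j ∈ Finset.range (k+1), hfun E j)
        = (∑ j ∈ Finset.range k, hfun E j) + hfun E k := Finset.sum_range_succ _ _
    have h5 : ((hfun E k : ℕ):ℚ) = (qchoose ((k:ℚ)+(e:ℚ)+3) 3 - qchoose ((k:ℚ)+3) 3)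
        - (qchoose (((k:ℚ)-1)+(e:ℚ)+3) 3 - qchoose (((k:ℚ)-1)+3) 3) := by
      have hc3 : ((k-1:ℕ):ℚ) = (k:ℚ)-1 := by
        push_cast [show 1 ≤ k by omega]
        ring
      rw [hc3] at h2
      rw [h4] at h1
      push_cast at h1 h2
      linarith [h1, h2]
    have h6 : ((e*k + (e + (e+1).choose 2) : ℕ):ℚ)
        = (qchoose ((k:ℚ)+(e:ℚ)+3) 3 - qchoose ((k:ℚ)+3) 3)
          - (qchoose (((k:ℚ)-1)+(e:ℚ)+3) 3 - qchoose (((k:ℚ)-1)+3) 3) := by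
      rw [qchoose3, qchoose3, qchoose3, qchoose3]
      push_cast [qc2 e]
      field_simp
      ring
    exact Nat.cast_injective (h5.trans h6.symm)
  set K := N₁ + N₂ + 1 + e*e + e with hK
  have hbase : phi e K ≤ hfun E K := by
    rw [hdiffk K (by omega), phi_top e K he (by omega)]
  have hlow := phidown E e K he hbase
  have hωK := hcomb K (by omega)
  rw [omega_eq_sum] at hωK
  have hsum_le : (∑ k ∈ Finset.range (K+1), ((phi e k : ℕ):ℚ))
      ≤ ((∑ k ∈ Finset.range (K+1), hfun E k : ℕ):ℚ) := by
    push_cast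
    apply Finset.sum_le_sum
    intro k hk
    have hlk := hlow k (by rw [Finset.mem_range] at hk; omega)
    exact_mod_cast hlk
  have hphi := sum_phi e K he (by omega)
  rw [hphi] at hsum_le
  linarith [hsum_le, hωK]
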